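/- arXiv:1703.03235 — 4 statements merged into one kernel-verified Lean document; each statement's English description precedes it below -/
import Mathlib

section
/- A generalized Gabidulin code of length n and dimension k (k ≤ n ≤ m) over F_{q^m} has minimum rank distance n - k + 1, i.e., it is an MRD code. -/
set_option linter.unusedSectionVars false
set_option linter.unusedVariables false
set_option maxHeartbeats 1000000

open Finset LinearMap Module Polynomial

section Gab

variable {Fq K : Type*} [Field Fq] [Fintype Fq] [Field K] [Algebra Fq K]
variable (q s p t : ℕ) [Fact (Nat.Prime p)] [CharP K p]




lemma gab_pow_add (hqpt : q = p ^ t) (e : ℕ) (x y : K) :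
    (x + y) ^ q ^ e = x ^ q ^ e + y ^ q ^ e := by
  subst hqpt
  rw [← pow_mul]
  exact add_pow_char_pow x y p (t * e)

lemma gab_pow_sub (hqpt : q = p ^ t) (e : ℕ) (x y : K) :
    (x - y) ^ q ^ e = x ^ q ^ e - y ^ q ^ e := by
  subst hqpt
  rw [← pow_mul]
  exact sub_pow_char_pow x y (t * e)

lemma gab_fq_pow (hq : Fintype.card Fq = q) (e : ℕ) (a : Fq) : a ^ q ^ e = a := by
  induction e with
  | zero => simp
  | succ e ih => rw [pow_succ, pow_mul, ih, ← hq, FiniteField.pow_card]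

lemma gab_pow_smul (hq : Fintype.card Fq = q) (hqpt : q = p ^ t) (e : ℕ) (a : Fq) (x : K) :
    (a • x) ^ q ^ e = a • x ^ q ^ e := by
  rw [Algebra.smul_def, Algebra.smul_def, mul_pow, ← map_pow, gab_fq_pow q hq e a]

/-- The `Fq`-linear evaluation map of a linearized (`q^s`-)polynomial with
coefficients `f 0, ..., f (d-1)`. -/
noncomputable def Lmap (hq : Fintype.card Fq = q) (hqpt : q = p ^ t) (f : ℕ → K) (d : ℕ) :
    K →ₗ[Fq] K where
  toFun x := ∑ i ∈ Finset.range d, f i * x ^ q ^ (s * i)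
  map_add' x y := by
    simp_rw [gab_pow_add q p t hqpt, mul_add]
    rw [Finset.sum_add_distrib]
  map_smul' a x := by
    simp_rw [gab_pow_smul q p t hq hqpt, RingHom.id_apply, Finset.smul_sum,
      Algebra.mul_smul_comm]

lemma Lmap_apply (hq : Fintype.card Fq = q) (hqpt : q = p ^ t) (f : ℕ → K) (d : ℕ) (x : K) :
    Lmap q s p t hq hqpt f d x = ∑ i ∈ Finset.range d, f i * x ^ q ^ (s * i) := rfl

/-- The map `x ↦ x^{q^s} - x`. -/
noncomputable def Dmap (hq : Fintype.card Fq = q) (hqpt : q = p ^ t) : K →ₗ[Fq] K where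
  toFun x := x ^ q ^ s - x
  map_add' x y := by show (x + y) ^ q ^ s - (x + y) = (x ^ q ^ s - x) + (y ^ q ^ s - y); rw [gab_pow_add q p t hqpt]; ring
  map_smul' a x := by
    simp only [RingHom.id_apply]
    rw [show ∀ z : K, z ^ q ^ s - z = z ^ q ^ s - z from fun z => rfl]
    show (a • x) ^ q ^ s - a • x = a • (x ^ q ^ s - x)
    rw [gab_pow_smul q p t hq hqpt, smul_sub]

lemma Dmap_apply (hq : Fintype.card Fq = q) (hqpt : q = p ^ t) (x : K) :
    Dmap q s p t hq hqpt x = x ^ q ^ s - x := rfl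

/-- Key telescoping identity: if `v` is a root of the linearized polynomial `f` of degree
`≤ d`, then `x ↦ L_f(vx)` factors through `x ↦ x^{q^s} - x`. -/
lemma gab_key (hqpt : q = p ^ t) (f : ℕ → K) (d : ℕ) (v x : K)
    (hv : (∑ i ∈ Finset.range (d + 1), f i * v ^ q ^ (s * i)) = 0) :
    ∑ i ∈ Finset.range (d + 1), f i * (v * x) ^ q ^ (s * i)
      = ∑ j ∈ Finset.range d,
          (∑ i ∈ Finset.Ioc j d, f i * v ^ q ^ (s * i)) * (x ^ q ^ s - x) ^ q ^ (s * j) := by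
  set g : ℕ → K := fun i => f i * v ^ q ^ (s * i) with hgdef
  have h2 : ∀ j : ℕ, (x ^ q ^ s - x) ^ q ^ (s * j)
      = x ^ q ^ (s * (j + 1)) - x ^ q ^ (s * j) := by
    intro j
    rw [gab_pow_sub q p t hqpt, ← pow_mul, ← pow_add]
    congr 2
    ring
  have lhs1 : ∑ i ∈ Finset.range (d + 1), f i * (v * x) ^ q ^ (s * i)
      = ∑ i ∈ Finset.range (d + 1), g i * (x ^ q ^ (s * i) - x) := by
    have : ∑ i ∈ Finset.range (d + 1), f i * (v * x) ^ q ^ (s * i)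
        = ∑ i ∈ Finset.range (d + 1), (g i * (x ^ q ^ (s * i) - x) + g i * x) := by
      refine Finset.sum_congr rfl fun i _ => ?_
      rw [mul_pow, hgdef]; ring
    rw [this, Finset.sum_add_distrib, ← Finset.sum_mul, ← hgdef]
    rw [show (∑ i ∈ Finset.range (d+1), g i) = 0 from hv, zero_mul, add_zero]
  rw [lhs1]
  have lhs2 : ∑ i ∈ Finset.range (d + 1), g i * (x ^ q ^ (s * i) - x)
      = ∑ i ∈ Finset.range (d + 1), ∑ j ∈ Finset.range i,
          g i * (x ^ q ^ (s * (j + 1)) - x ^ q ^ (s * j)) := by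
    refine Finset.sum_congr rfl fun i _ => ?_
    rw [← Finset.mul_sum, Finset.sum_range_sub (fun j => x ^ q ^ (s * j)) i]
    simp
  rw [lhs2]
  have swap : ∑ i ∈ Finset.range (d + 1), ∑ j ∈ Finset.range i,
          g i * (x ^ q ^ (s * (j + 1)) - x ^ q ^ (s * j))
      = ∑ j ∈ Finset.range d, ∑ i ∈ Finset.Ioc j d,
          g i * (x ^ q ^ (s * (j + 1)) - x ^ q ^ (s * j)) := by
    refine Finset.sum_comm' ?_
    intro i j
    simp only [Finset.mem_range, Finset.mem_Ioc]
    omega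
  rw [swap]
  refine Finset.sum_congr rfl fun j _ => ?_
  rw [← Finset.sum_mul, h2]





lemma gab_pow_stable {x : K} (hx : x ^ q ^ s = x) : ∀ a : ℕ, x ^ q ^ (s * a) = x := by
  intro a
  induction a with
  | zero => simp
  | succ a ih =>
    have : q ^ (s * (a + 1)) = q ^ (s * a) * q ^ s := by rw [← pow_add]; ring_nf
    rw [this, pow_mul, ih, hx]

/-- If `x^{q^s} = x` and `s` is coprime to `m = [K : Fq]`, then `x^q = x`. -/
lemma gab_fixed_pow (hq : Fintype.card Fq = q) [FiniteDimensional Fq K]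
    (hs : Nat.Coprime s (finrank Fq K)) (x : K) (hx : x ^ q ^ s = x) : x ^ q = x := by
  set m := finrank Fq K with hm
  haveI : Finite K := Module.finite_of_finite Fq
  haveI : Fintype K := Fintype.ofFinite K
  have hcard : Fintype.card K = q ^ m := by rw [← hq, hm]; exact card_eq_pow_finrank
  have hxm : x ^ q ^ m = x := by rw [← hcard]; exact FiniteField.pow_card x
  have hm1 : 1 ≤ m := hm ▸ finrank_pos
  rcases eq_or_lt_of_le hm1 with hm1' | hm2
  · have := hxm
    rw [← hm1', pow_one] at this
    exact this
  · obtain ⟨a, -, ha⟩ := Nat.exists_mul_mod_eq_one_of_coprime hs hm2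
    have hdm := Nat.div_add_mod (s * a) m
    rw [ha] at hdm
    set b := s * a / m with hb
    have h1 : x ^ q ^ (s * a) = x := gab_pow_stable q s hx a
    have h2 : x ^ q ^ (m * b) = x := gab_pow_stable q m hxm b
    have h3 : q ^ (s * a) = q ^ (m * b) * q := by
      rw [← pow_succ, ← hdm]
    rw [h3, pow_mul, h2] at h1
    exact h1

/-- The set of `x ∈ K` with `x^q = x` is exactly the image of `Fq`. -/
lemma gab_fixed_mem (hq : Fintype.card Fq = q) (x : K) (hx : x ^ q = x) :
    ∃ a : Fq, algebraMap Fq K a = x := by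
  classical
  have hq2 : 2 ≤ q := hq ▸ Fintype.one_lt_card
  set P : K[X] := X ^ q - X with hP
  have hPne : P ≠ 0 := by
    intro h
    have h1 : P.coeff q = 1 := by
      rw [hP, coeff_sub, coeff_X_pow, if_pos rfl, coeff_X, if_neg (by omega : 1 ≠ q), sub_zero]
    rw [h] at h1
    simp at h1
  have hdeg : P.natDegree ≤ q := by
    refine le_trans (natDegree_sub_le _ _) ?_
    rw [natDegree_X_pow, natDegree_X]
    exact max_le le_rfl (by omega)
  have hroot : ∀ y : K, y ^ q = y → y ∈ P.roots.toFinset := by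
    intro y hy
    rw [Multiset.mem_toFinset, mem_roots hPne]
    simp [hP, IsRoot, hy]
  set I : Finset K := Finset.image (algebraMap Fq K) Finset.univ with hI
  have hIsub : I ⊆ P.roots.toFinset := by
    intro z hz
    rw [hI, Finset.mem_image] at hz
    obtain ⟨a, _, rfl⟩ := hz
    refine hroot _ ?_
    rw [← map_pow]
    congr 1
    rw [← hq]; exact FiniteField.pow_card a
  have hIcard : I.card = q := by
    rw [hI, Finset.card_image_of_injective _ (algebraMap Fq K).injective, Finset.card_univ, hq]
  by_contra hcon
  push_neg at hcon
  have hxI : x ∉ I := by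
    intro hxmem
    rw [hI, Finset.mem_image] at hxmem
    obtain ⟨a, _, ha⟩ := hxmem
    exact hcon a ha
  have hins : insert x I ⊆ P.roots.toFinset := by
    intro z hz
    rcases Finset.mem_insert.mp hz with rfl | hz
    · exact hroot _ hx
    · exact hIsub hz
  have hc1 : q + 1 ≤ P.roots.toFinset.card := by
    have := Finset.card_le_card hins
    rw [Finset.card_insert_of_notMem hxI, hIcard] at this
    omega
  have hc2 : P.roots.toFinset.card ≤ q := by
    refine le_trans (Multiset.toFinset_card_le _) (le_trans ?_ hdeg)
    exact_mod_cast Polynomial.card_roots' P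
  omega

/-- Rank-nullity style bound for kernels of compositions. -/
lemma gab_ker_comp [FiniteDimensional Fq K] (A B : K →ₗ[Fq] K) :
    finrank Fq (ker (A ∘ₗ B)) ≤ finrank Fq (ker A) + finrank Fq (ker B) := by
  have hmem : ∀ x : ker (A ∘ₗ B), B (x : K) ∈ ker A := by
    intro x
    have h := x.2
    simp only [LinearMap.mem_ker, LinearMap.comp_apply] at h
    simpa [LinearMap.mem_ker] using h
  set φ : ker (A ∘ₗ B) →ₗ[Fq] ker A :=
    LinearMap.codRestrict (ker A) (B.domRestrict (ker (A ∘ₗ B))) hmem with hφ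
  have h1 := LinearMap.finrank_range_add_finrank_ker φ
  have h2 : finrank Fq (range φ) ≤ finrank Fq (ker A) := Submodule.finrank_le _
  have h3 : finrank Fq (ker φ) ≤ finrank Fq (ker B) := by
    have hmem2 : ∀ x : ker φ, ((x : ker (A ∘ₗ B)) : K) ∈ ker B := by
      intro x
      have h := x.2
      rw [LinearMap.mem_ker] at h
      have h' : B ((x : ker (A ∘ₗ B)) : K) = 0 := by
        have h2 := congrArg Subtype.val h
        simp only [hφ, LinearMap.codRestrict_apply, LinearMap.domRestrict_apply,
          ZeroMemClass.coe_zero] at h2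
        exact h2
      rwa [LinearMap.mem_ker]
    set ψ : ker φ →ₗ[Fq] ker B :=
      LinearMap.codRestrict (ker B)
        ((ker (A ∘ₗ B)).subtype.comp (ker φ).subtype) hmem2 with hψ
    have hinj : Function.Injective ψ := by
      intro a b hab
      have : ((a : ker (A ∘ₗ B)) : K) = ((b : ker (A ∘ₗ B)) : K) := by
        have := congrArg Subtype.val hab
        exact this
      exact Subtype.ext (Subtype.ext this)
    exact LinearMap.finrank_le_finrank_of_injective hinj
  omega

/-- Lower bound: `finrank (A(W)) + finrank (ker A) ≥ finrank W`. -/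
lemma gab_map_lower [FiniteDimensional Fq K] (A : K →ₗ[Fq] K) (W : Submodule Fq K) :
    finrank Fq W ≤ finrank Fq (W.map A) + finrank Fq (ker A) := by
  have h1 := LinearMap.finrank_range_add_finrank_ker (A.domRestrict W)
  rw [LinearMap.range_domRestrict] at h1
  have h2 : finrank Fq (ker (A.domRestrict W)) ≤ finrank Fq (ker A) := by
    have hmem : ∀ x : ker (A.domRestrict W), ((x : W) : K) ∈ ker A := by
      intro x
      have h := x.2
      simp only [LinearMap.mem_ker, LinearMap.domRestrict_apply] at h
      simpa [LinearMap.mem_ker] using h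
    set ψ : ker (A.domRestrict W) →ₗ[Fq] ker A :=
      LinearMap.codRestrict (ker A) (W.subtype.comp (ker (A.domRestrict W)).subtype) hmem
      with hψ
    have hinj : Function.Injective ψ := by
      intro a b hab
      have := congrArg Subtype.val hab
      exact Subtype.ext (Subtype.ext (by exact this))
    exact LinearMap.finrank_le_finrank_of_injective hinj
  omega

/-- Upper bound: if `W₀ ≤ W` and `W₀ ≤ ker A` then
`finrank (A(W)) + finrank W₀ ≤ finrank W`. -/
lemma gab_map_upper [FiniteDimensional Fq K] (A : K →ₗ[Fq] K) (W W₀ : Submodule Fq K)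
    (h0 : W₀ ≤ W) (hker : W₀ ≤ ker A) :
    finrank Fq (W.map A) + finrank Fq W₀ ≤ finrank Fq W := by
  have h1 := LinearMap.finrank_range_add_finrank_ker (A.domRestrict W)
  rw [LinearMap.range_domRestrict] at h1
  have h2 : finrank Fq W₀ ≤ finrank Fq (ker (A.domRestrict W)) := by
    have hmem : ∀ x : W₀, (Submodule.inclusion h0) x ∈ ker (A.domRestrict W) := by
      intro x
      rw [LinearMap.mem_ker, LinearMap.domRestrict_apply]
      have hv : ((Submodule.inclusion h0 x : W) : K) = (x : K) := rfl
      rw [hv]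
      exact hker x.2
    set ψ : W₀ →ₗ[Fq] ker (A.domRestrict W) :=
      LinearMap.codRestrict _ (Submodule.inclusion h0) hmem with hψ
    have hinj : Function.Injective ψ := by
      intro a b hab
      have h := congrArg Subtype.val hab
      have h' : ((Submodule.inclusion h0 a : W) : K) = ((Submodule.inclusion h0 b : W) : K) := by
        have := congrArg Subtype.val h
        simpa [hψ] using this
      exact Subtype.ext h'
    exact LinearMap.finrank_le_finrank_of_injective hinj
  omega

lemma gab_Dmap_ker (hq : Fintype.card Fq = q) (hqpt : q = p ^ t) [FiniteDimensional Fq K]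
    (hs : Nat.Coprime s (finrank Fq K)) :
    finrank Fq (ker (Dmap q s p t hq hqpt : K →ₗ[Fq] K)) ≤ 1 := by
  have hle : ker (Dmap q s p t hq hqpt : K →ₗ[Fq] K) ≤ range (Algebra.linearMap Fq K) := by
    intro x hx
    rw [LinearMap.mem_ker] at hx
    rw [Dmap_apply, sub_eq_zero] at hx
    have hxq : x ^ q = x := gab_fixed_pow q s hq hs x hx
    obtain ⟨a, ha⟩ := gab_fixed_mem q hq x hxq
    exact ⟨a, ha⟩
  have h2 : finrank Fq (range (Algebra.linearMap Fq K)) = 1 := by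
    rw [LinearMap.finrank_range_of_inj (f := Algebra.linearMap Fq K)
      (by intro a b hab; exact (algebraMap Fq K).injective (by simpa using hab))]
    exact finrank_self Fq
  calc finrank Fq (ker (Dmap q s p t hq hqpt : K →ₗ[Fq] K))
      ≤ finrank Fq (range (Algebra.linearMap Fq K)) := Submodule.finrank_mono hle
    _ = 1 := h2

theorem gab_ker_bound (hq : Fintype.card Fq = q) (hqpt : q = p ^ t) [FiniteDimensional Fq K]
    (hs : Nat.Coprime s (finrank Fq K)) :
    ∀ (d : ℕ) (f : ℕ → K), (∃ i < d, f i ≠ 0) →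
      finrank Fq (ker (Lmap q s p t hq hqpt f d : K →ₗ[Fq] K)) ≤ d - 1 := by
  intro d
  induction d with
  | zero => rintro f ⟨i, hi, -⟩; omega
  | succ d ih =>
    intro f hf
    by_cases hker : ker (Lmap q s p t hq hqpt f (d + 1) : K →ₗ[Fq] K) = ⊥
    · rw [hker, finrank_bot]; omega
    · obtain ⟨v, hv, hv0⟩ := Submodule.exists_mem_ne_zero_of_ne_bot hker
      rw [LinearMap.mem_ker, Lmap_apply] at hv
      set h : ℕ → K := fun j => ∑ i ∈ Finset.Ioc j d, f i * v ^ q ^ (s * i) with hh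
      -- the composition identity
      have hcomp : (Lmap q s p t hq hqpt f (d + 1) : K →ₗ[Fq] K) ∘ₗ LinearMap.mulLeft Fq v
          = (Lmap q s p t hq hqpt h d : K →ₗ[Fq] K) ∘ₗ Dmap q s p t hq hqpt := by
        ext x
        rw [LinearMap.comp_apply, LinearMap.comp_apply, LinearMap.mulLeft_apply,
          Lmap_apply, Lmap_apply, Dmap_apply]
        exact gab_key q s p t hqpt f d v x hv
      -- mulLeft v is surjective, so the two maps have the same kernel rank
      have hrange : range ((Lmap q s p t hq hqpt f (d + 1) : K →ₗ[Fq] K)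
            ∘ₗ LinearMap.mulLeft Fq v)
          = range (Lmap q s p t hq hqpt f (d + 1) : K →ₗ[Fq] K) := by
        rw [LinearMap.range_comp]
        have hsurj : range (LinearMap.mulLeft Fq v : K →ₗ[Fq] K) = ⊤ := by
          rw [LinearMap.range_eq_top]
          intro y
          refine ⟨v⁻¹ * y, ?_⟩
          rw [LinearMap.mulLeft_apply, ← mul_assoc, mul_inv_cancel₀ hv0, one_mul]
        rw [hsurj, Submodule.map_top]
      have e1 := LinearMap.finrank_range_add_finrank_ker
        (Lmap q s p t hq hqpt f (d + 1) : K →ₗ[Fq] K)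
      have e2 := LinearMap.finrank_range_add_finrank_ker
        ((Lmap q s p t hq hqpt f (d + 1) : K →ₗ[Fq] K) ∘ₗ LinearMap.mulLeft Fq v)
      rw [hrange] at e2
      rw [hcomp] at e2
      by_cases hnz : ∃ j < d, h j ≠ 0
      · have hih := ih h hnz
        obtain ⟨j0, hj0, _⟩ := hnz
        have hcc := gab_ker_comp (Lmap q s p t hq hqpt h d : K →ₗ[Fq] K)
          (Dmap q s p t hq hqpt)
        have hD := gab_Dmap_ker q s p t hq hqpt hs
        omega
      · exfalso
        push_neg at hnz
        set g : ℕ → K := fun i => f i * v ^ q ^ (s * i) with hg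
        have hIoc : ∀ j, j ≤ d → ∑ i ∈ Finset.Ioc j d, g i = 0 := by
          intro j hj
          rcases lt_or_eq_of_le hj with hj' | rfl
          · exact hnz j hj'
          · simp
        have hsum : ∑ i ∈ Finset.range (d + 1), g i = 0 := hv
        have hg0 : ∀ i, i < d + 1 → g i = 0 := by
          intro i hi
          rcases Nat.eq_zero_or_pos i with rfl | hi1
          · have hr : Finset.range (d + 1) = insert 0 (Finset.Ioc 0 d) := by
              ext x; simp only [Finset.mem_range, Finset.mem_insert, Finset.mem_Ioc]; omega
            rw [hr, Finset.sum_insert (by simp)] at hsum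
            rw [hIoc 0 (by omega)] at hsum
            simpa using hsum
          · have h1 : Finset.Ioc (i - 1) d = insert i (Finset.Ioc i d) := by
              ext x; simp only [Finset.mem_Ioc, Finset.mem_insert]; omega
            have h2 := hIoc (i - 1) (by omega)
            rw [h1, Finset.sum_insert (by simp)] at h2
            rw [hIoc i (by omega)] at h2
            simpa using h2
        obtain ⟨i, hi, hfi⟩ := hf
        have := hg0 i hi
        rw [hg] at this
        simp only [mul_eq_zero] at this
        rcases this with h' | h'
        · exact hfi h'
        · have hqpos : 0 < q := by
            rw [hqpt]; exact pow_pos (Fact.out (p := p.Prime)).pos t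
          exact hv0 ((pow_eq_zero_iff (pow_pos hqpos (s * i)).ne').mp h')


end Gab
/-- A generalized Gabidulin code of length n and dimension k has minimum rank distance
n - k + 1, i.e. it is MRD. The rank distance of vectors in `F_{q^m}^n` is the dimension of
the `F_q`-span of the coordinates of their difference (the rank of the matrix
representation over `F_q`). -/
theorem gabidulin_is_MRD (q m n k s : ℕ) (Fq K : Type*) [Field Fq] [Fintype Fq]
    [Field K] [Algebra Fq K] [FiniteDimensional Fq K]
    (hq : Fintype.card Fq = q) (hm : Module.finrank Fq K = m)
    (hk : 0 < k) (hkn : k ≤ n) (hnm : n ≤ m) (hs : Nat.Coprime s m)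
    (g : Fin n → K) (hg : LinearIndependent Fq g)
    (C : Set (Fin n → K))
    (hC : C = {x | ∃ f : Fin k → K, x = fun j => ∑ i : Fin k, f i * g j ^ q ^ (s * (i : ℕ))}) :
    (∀ c ∈ C, ∀ c' ∈ C, c ≠ c' →
      n - k + 1 ≤ Module.finrank Fq (Submodule.span Fq (Set.range (c - c')))) ∧
    (∃ c ∈ C, ∃ c' ∈ C, c ≠ c' ∧
      Module.finrank Fq (Submodule.span Fq (Set.range (c - c'))) = n - k + 1) := by
  classical
  subst hC
  -- characteristic setup
  set p := ringChar Fq with hpdef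
  haveI : CharP Fq p := ringChar.charP Fq
  obtain ⟨tn, hpp, hcard⟩ := FiniteField.card Fq p
  haveI : Fact p.Prime := ⟨hpp⟩
  haveI : CharP K p := charP_of_injective_algebraMap (algebraMap Fq K).injective p
  set t : ℕ := (tn : ℕ) with htdef
  have hqpt : q = p ^ t := by rw [← hq, hcard]
  have hs' : Nat.Coprime s (finrank Fq K) := by rw [hm]; exact hs
  -- coefficient extension and basic conversions
  set F : (Fin k → K) → ℕ → K := fun f i => if h : i < k then f ⟨i, h⟩ else 0 with hF
  have hLg : ∀ (f : Fin k → K) (x : K),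
      (∑ i : Fin k, f i * x ^ q ^ (s * (i : ℕ))) = Lmap q s p t hq hqpt (F f) k x := by
    intro f x
    rw [Lmap_apply,
      ← Fin.sum_univ_eq_sum_range (fun i => F f i * x ^ q ^ (s * i)) k]
    refine Finset.sum_congr rfl fun i _ => ?_
    congr 1
    simp [hF, i.is_lt]
  have hFnz : ∀ f : Fin k → K, f ≠ 0 → ∃ i < k, F f i ≠ 0 := by
    intro f hf
    rcases Function.ne_iff.mp hf with ⟨i, hi⟩
    refine ⟨i, i.is_lt, ?_⟩
    simp only [hF, i.is_lt, dif_pos, Fin.eta]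
    simpa using hi
  have hkerb : ∀ f : Fin k → K, f ≠ 0 →
      finrank Fq (ker (Lmap q s p t hq hqpt (F f) k : K →ₗ[Fq] K)) ≤ k - 1 := fun f hf =>
    gab_ker_bound q s p t hq hqpt hs' k (F f) (hFnz f hf)
  set W : Submodule Fq K := Submodule.span Fq (Set.range g) with hWdef
  have hWrank : finrank Fq W = n := by
    rw [hWdef, finrank_span_eq_card hg, Fintype.card_fin]
  have hspan : ∀ f : Fin k → K,
      Submodule.span Fq (Set.range (fun j => Lmap q s p t hq hqpt (F f) k (g j)))
        = W.map (Lmap q s p t hq hqpt (F f) k) := by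
    intro f
    rw [hWdef, show (fun j => Lmap q s p t hq hqpt (F f) k (g j))
        = (Lmap q s p t hq hqpt (F f) k : K →ₗ[Fq] K) ∘ g from rfl,
      Set.range_comp, Submodule.span_image]
  constructor
  · -- minimum distance lower bound
    rintro c ⟨f, rfl⟩ c' ⟨f', rfl⟩ hne
    set δ : Fin k → K := f - f' with hδdef
    have hδ : δ ≠ 0 := by
      intro h
      apply hne
      have hff : f = f' := sub_eq_zero.mp h
      rw [hff]
    have hdiff : (fun j => ∑ i : Fin k, f i * g j ^ q ^ (s * (i : ℕ)))
          - (fun j => ∑ i : Fin k, f' i * g j ^ q ^ (s * (i : ℕ)))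
        = fun j => Lmap q s p t hq hqpt (F δ) k (g j) := by
      funext j
      simp only [Pi.sub_apply]
      rw [← hLg δ (g j), ← Finset.sum_sub_distrib]
      refine Finset.sum_congr rfl fun i _ => ?_
      rw [hδdef, Pi.sub_apply, sub_mul]
    rw [hdiff, hspan δ]
    have hlow := gab_map_lower (Lmap q s p t hq hqpt (F δ) k) W
    have hker := hkerb δ hδ
    rw [hWrank] at hlow
    omega
  · -- existence of a codeword of rank exactly n - k + 1
    have hkn' : k - 1 ≤ n := by omega
    set M : (Fin k → K) →ₗ[K] (Fin (k - 1) → K) := LinearMap.pi fun j =>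
      ∑ i : Fin k, (g (Fin.castLE hkn' j) ^ q ^ (s * (i : ℕ))) • LinearMap.proj i with hM
    have hMnotinj : ker M ≠ ⊥ := by
      intro hinj
      have hi := LinearMap.finrank_le_finrank_of_injective
        (LinearMap.ker_eq_bot.mp hinj)
      rw [Module.finrank_pi K, Module.finrank_pi K, Fintype.card_fin, Fintype.card_fin] at hi
      omega
    obtain ⟨f, hfker, hf0⟩ := Submodule.exists_mem_ne_zero_of_ne_bot hMnotinj
    rw [LinearMap.mem_ker] at hfker
    have hgker : ∀ j : Fin (k - 1),
        Lmap q s p t hq hqpt (F f) k (g (Fin.castLE hkn' j)) = 0 := by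
      intro j
      rw [← hLg f]
      have hcf := congrFun hfker j
      simp only [hM, LinearMap.pi_apply, LinearMap.sum_apply, LinearMap.smul_apply,
        LinearMap.proj_apply, smul_eq_mul, Pi.zero_apply] at hcf
      rw [← hcf]
      exact Finset.sum_congr rfl fun i _ => mul_comm _ _
    set L : K →ₗ[Fq] K := Lmap q s p t hq hqpt (F f) k with hL
    have hcL : (fun j => ∑ i : Fin k, f i * g j ^ q ^ (s * (i : ℕ)))
        = fun j => L (g j) := funext fun j => hLg f (g j)
    refine ⟨(fun j => ∑ i : Fin k, f i * g j ^ q ^ (s * (i : ℕ))), ⟨f, rfl⟩,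
      0, ⟨0, by funext j; simp⟩, ?_, ?_⟩
    · -- nonzero
      intro hc0
      have hWker : W ≤ ker L := by
        rw [hWdef, Submodule.span_le]
        rintro x ⟨j, rfl⟩
        rw [SetLike.mem_coe, LinearMap.mem_ker, hL]
        rw [← hLg f (g j)]
        simpa using congrFun hc0 j
      have hmono := Submodule.finrank_mono hWker
      rw [hWrank] at hmono
      have hkk := hkerb f hf0
      rw [← hL] at hkk
      omega
    · rw [sub_zero, hcL, hspan f, ← hL]
      -- lower bound
      have hlow := gab_map_lower L W
      have hker := hkerb f hf0
      rw [← hL] at hker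
      rw [hWrank] at hlow
      -- upper bound
      set W₀ : Submodule Fq K := Submodule.span Fq (Set.range (g ∘ Fin.castLE hkn'))
        with hW0def
      have hW0W : W₀ ≤ W := by
        rw [hW0def, hWdef, Submodule.span_le]
        exact (Set.range_comp_subset_range _ _).trans Submodule.subset_span
      have hW0ker : W₀ ≤ ker L := by
        rw [hW0def, Submodule.span_le]
        rintro x ⟨j, rfl⟩
        rw [SetLike.mem_coe, LinearMap.mem_ker]
        exact hgker j
      have hW0rank : finrank Fq W₀ = k - 1 := by
        rw [hW0def, finrank_span_eq_card (hg.comp _ (Fin.castLE_injective hkn')),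
          Fintype.card_fin]
      have hup := gab_map_upper L W W₀ hW0W hW0ker
      rw [hWrank, hW0rank] at hup
      omega
end

section
/- In the linearized polynomial fuzzy vault scheme: if κ is a linearized polynomial of q-degree less than ℓ (in powers q^{s·i}, s coprime to n), A is an F_q-basis of F_{q^n}, W is a submitted F_q-basis with d_Δ(A,W) ≤ 2⌊(n-ℓ)/2⌋, and c' is the received word (g_i, L_Z(g_i))_{i=1}^n, then the rank distance between c' and the secret codeword c = (g_i, κ(g_i))_{i=1}^n is at most ⌊(n-ℓ)/2⌋, so decoding the Gabidulin code G_{ℓ,s}(g_1,...,g_n) up to its error-correcting capability recovers κ. -/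
open Module Submodule Polynomial

section FV
variable {Fq K : Type*} [Field Fq] [Fintype Fq] [Field K] [Algebra Fq K]

lemma fv_char : ∃ p k : ℕ, p.Prime ∧ 0 < k ∧ Fintype.card Fq = p ^ k ∧ CharP K p := by
  set p := ringChar Fq
  haveI : CharP Fq p := ringChar.charP Fq
  have hp : p.Prime := CharP.char_is_prime Fq p
  obtain ⟨k, -, hk⟩ := FiniteField.card Fq p
  exact ⟨p, k, hp, k.2, hk, charP_of_injective_algebraMap (algebraMap Fq K).injective p⟩

lemma fv_pow_add (e : ℕ) (x y : K) :
    (x + y) ^ Fintype.card Fq ^ e = x ^ Fintype.card Fq ^ e + y ^ Fintype.card Fq ^ e := by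
  obtain ⟨p, k, hp, hk, hcard, hchar⟩ := fv_char (Fq := Fq) (K := K)
  haveI := Fact.mk hp
  haveI : ExpChar K p := ExpChar.prime hp
  rw [hcard, ← pow_mul, add_pow_char_pow]

noncomputable def frobPow (Fq : Type*) {K : Type*} [Field Fq] [Fintype Fq] [Field K]
    [Algebra Fq K] (e : ℕ) : K →ₗ[Fq] K where
  toFun x := x ^ Fintype.card Fq ^ e
  map_add' x y := fv_pow_add e x y
  map_smul' a x := by
    simp only [RingHom.id_apply, Algebra.smul_def, mul_pow, ← map_pow,
      FiniteField.pow_card_pow]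

@[simp] lemma frobPow_apply (e : ℕ) (x : K) :
    frobPow Fq e x = x ^ Fintype.card Fq ^ e := rfl

lemma fv_pow_sub (e : ℕ) (x y : K) :
    (x - y) ^ Fintype.card Fq ^ e = x ^ Fintype.card Fq ^ e - y ^ Fintype.card Fq ^ e :=
  map_sub (frobPow Fq e) x y

noncomputable def linComb (Fq : Type*) {K : Type*} [Field Fq] [Fintype Fq] [Field K]
    [Algebra Fq K] (s : ℕ) {m : ℕ} (δ : Fin m → K) : K →ₗ[Fq] K :=
  ∑ i : Fin m, (LinearMap.mulLeft Fq (δ i)).comp (frobPow Fq (s * i))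

lemma linComb_apply {s : ℕ} {m : ℕ} (δ : Fin m → K) (x : K) :
    linComb Fq s δ x = ∑ i : Fin m, δ i * x ^ Fintype.card Fq ^ (s * i) := by
  rw [linComb, LinearMap.sum_apply]
  simp

lemma fv_division (s : ℕ) (Δ : K) :
    ∀ (m : ℕ) (δ : Fin (m + 1) → K), ∃ (ε : Fin m → K) (r : K), ∀ x : K,
      (∑ i : Fin (m + 1), δ i * x ^ Fintype.card Fq ^ (s * i)) =
        (∑ j : Fin m, ε j * (x ^ Fintype.card Fq ^ s - Δ * x) ^ Fintype.card Fq ^ (s * j))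
          + r * x := by
  intro m
  induction m with
  | zero =>
    intro δ
    exact ⟨Fin.elim0, δ 0, fun x => by simp⟩
  | succ m ih =>
    intro δ
    set Q := Fintype.card Fq with hQ
    set δ' : Fin (m + 1) → K := fun i =>
      δ i.castSucc + (if (i : ℕ) = m then δ (Fin.last (m + 1)) * Δ ^ Q ^ (s * m) else 0)
        with hδ'
    obtain ⟨ε', r, hε'⟩ := ih δ'
    refine ⟨Fin.snoc ε' (δ (Fin.last (m + 1))), r, fun x => ?_⟩
    have hE : (x ^ Q ^ s - Δ * x) ^ Q ^ (s * m)
        = x ^ Q ^ (s * (m + 1)) - Δ ^ Q ^ (s * m) * x ^ Q ^ (s * m) := by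
      rw [fv_pow_sub, ← hQ, mul_pow, ← pow_mul, ← pow_add]
      ring_nf
    have hsum : ∀ A : K, ∑ i : Fin (m + 1),
        (if (i : ℕ) = m then A * x ^ Q ^ (s * (i : ℕ)) else 0) = A * x ^ Q ^ (s * m) := by
      intro A
      rw [Fin.sum_univ_castSucc]
      rw [Finset.sum_eq_zero fun i _ => by
        have := i.isLt; simp only [Fin.coe_castSucc]; rw [if_neg (by omega)]]
      simp
    calc ∑ i : Fin (m + 2), δ i * x ^ Q ^ (s * i)
        = (∑ i : Fin (m + 1), δ i.castSucc * x ^ Q ^ (s * i))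
            + δ (Fin.last (m + 1)) * x ^ Q ^ (s * (m + 1)) := by
          rw [Fin.sum_univ_castSucc]
          simp only [Fin.coe_castSucc, Fin.val_last]
      _ = (∑ i : Fin (m + 1), δ' i * x ^ Q ^ (s * i))
            + δ (Fin.last (m + 1)) * ((x ^ Q ^ s - Δ * x) ^ Q ^ (s * m)) := by
          rw [hE]
          simp only [hδ', add_mul, Finset.sum_add_distrib, ite_mul, zero_mul]
          rw [hsum]
          ring
      _ = (∑ j : Fin (m + 1), (Fin.snoc ε' (δ (Fin.last (m + 1))) : Fin (m + 1) → K) j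
              * (x ^ Q ^ s - Δ * x) ^ Q ^ (s * j)) + r * x := by
          rw [hε' x, Fin.sum_univ_castSucc]
          simp only [Fin.snoc_castSucc, Fin.snoc_last, Fin.coe_castSucc, Fin.val_last]
          ring


lemma fv_exists_algebraMap_eq {u : K} (hu : u ^ Fintype.card Fq = u) :
    ∃ a : Fq, algebraMap Fq K a = u := by
  classical
  set q := Fintype.card Fq with hq
  have hq1 : 1 < q := Fintype.one_lt_card
  set P : K[X] := X ^ q - X with hP
  have hP0 : P ≠ 0 := FiniteField.X_pow_card_sub_X_ne_zero K hq1
  set T : Finset K := Finset.univ.image (algebraMap Fq K) with hT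
  have hTcard : T.card = q := by
    rw [hT, Finset.card_image_of_injective _ (algebraMap Fq K).injective, Finset.card_univ]
  have hsub : T ⊆ P.roots.toFinset := by
    intro y hy
    obtain ⟨a, -, rfl⟩ := Finset.mem_image.mp hy
    rw [Multiset.mem_toFinset, mem_roots hP0]
    simp [hP, hq, ← map_pow, FiniteField.pow_card]
  have hcard : P.roots.toFinset.card ≤ q := by
    calc P.roots.toFinset.card ≤ Multiset.card P.roots := Multiset.toFinset_card_le _
    _ ≤ P.natDegree := P.card_roots'
    _ = q := FiniteField.X_pow_card_sub_X_natDegree_eq K hq1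
  have hTeq : T = P.roots.toFinset := Finset.eq_of_subset_of_card_le hsub (by omega)
  have hu' : u ∈ P.roots.toFinset := by
    rw [Multiset.mem_toFinset, mem_roots hP0]
    simp [hP, hu]
  rw [← hTeq] at hu'
  obtain ⟨a, -, ha⟩ := Finset.mem_image.mp hu'
  exact ⟨a, ha⟩

lemma fv_pow_iter {u : K} {e : ℕ} (hu : u ^ Fintype.card Fq ^ e = u) (a : ℕ) :
    u ^ Fintype.card Fq ^ (e * a) = u := by
  induction a with
  | zero => simp
  | succ a ih =>
    have : e * (a + 1) = e * a + e := by ring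
    rw [this, pow_add, pow_mul, ih, hu]

lemma fv_ker_le_span [FiniteDimensional Fq K] {n s : ℕ} (hn : Module.finrank Fq K = n)
    (hn0 : 0 < n) (hs : Nat.Coprime s n) {v : K} (hv : v ≠ 0) :
    LinearMap.ker (frobPow Fq s - LinearMap.mulLeft Fq (v ^ Fintype.card Fq ^ s * v⁻¹))
      ≤ Submodule.span Fq {v} := by
  classical
  set q := Fintype.card Fq with hq
  intro x hx
  rcases eq_or_lt_of_le (show 1 ≤ n from hn0) with hn1 | hn1
  · -- n = 1 : the span of v is everything
    have : Submodule.span Fq {v} = ⊤ := by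
      apply Submodule.eq_top_of_finrank_eq
      rw [finrank_span_singleton hv, hn, ← hn1]
    rw [this]; trivial
  · rw [LinearMap.mem_ker, LinearMap.sub_apply, frobPow_apply, LinearMap.mulLeft_apply,
      sub_eq_zero] at hx
    rcases eq_or_ne x 0 with rfl | hx0
    · exact Submodule.zero_mem _
    set u : K := x * v⁻¹ with hu
    have hΔ : v ^ q ^ s ≠ 0 := pow_ne_zero _ hv
    have hus : u ^ q ^ s = u := by
      rw [hu, mul_pow, hx]
      field_simp
      rw [← mul_pow, mul_one_div_cancel hv, one_pow]
    haveI : Finite K := Module.finite_of_finite Fq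
    haveI : Fintype K := Fintype.ofFinite K
    have hcardK : Fintype.card K = q ^ n := by
      rw [card_eq_pow_finrank (K := Fq) (V := K), hn, hq]
    have hun : u ^ q ^ n = u := by
      conv_rhs => rw [← FiniteField.pow_card u]
      rw [hcardK]
    obtain ⟨a, -, ha⟩ := Nat.exists_mul_mod_eq_one_of_coprime hs hn1
    have hdm := Nat.div_add_mod (s * a) n
    rw [ha] at hdm
    have huq : u ^ q = u := by
      have h1 : u ^ q ^ (s * a) = u := fv_pow_iter hus a
      have h2 : u ^ q ^ (n * (s * a / n)) = u := fv_pow_iter hun _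
      calc u ^ q = (u ^ q ^ (n * (s * a / n))) ^ q := by rw [h2]
        _ = u ^ q ^ (n * (s * a / n) + 1) := by rw [← pow_mul, ← pow_succ]
        _ = u ^ q ^ (s * a) := by rw [hdm]
        _ = u := h1
    obtain ⟨b, hb⟩ := fv_exists_algebraMap_eq huq
    have : x = b • v := by
      rw [Algebra.smul_def, hb, hu]
      field_simp
    rw [this]
    exact Submodule.smul_mem _ _ (Submodule.mem_span_singleton_self v)

lemma fv_finrank_ker_comp_le {R M : Type*} [Field R] [AddCommGroup M] [Module R M]
    [FiniteDimensional R M] (Q E : M →ₗ[R] M) :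
    finrank R (LinearMap.ker (Q ∘ₗ E)) ≤
      finrank R (LinearMap.ker Q) + finrank R (LinearMap.ker E) := by
  set ψ : LinearMap.ker (Q ∘ₗ E) →ₗ[R] LinearMap.ker Q :=
    { toFun := fun x => ⟨E x, LinearMap.mem_ker.mpr (by
        rw [← LinearMap.comp_apply]
        exact LinearMap.mem_ker.mp x.2)⟩
      map_add' := fun x y => Subtype.ext (by simp)
      map_smul' := fun c x => Subtype.ext (by simp) } with hψ
  have hrn := LinearMap.finrank_range_add_finrank_ker ψ
  have h1 : finrank R (LinearMap.range ψ) ≤ finrank R (LinearMap.ker Q) :=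
    (LinearMap.range ψ).finrank_le
  have h2 : finrank R (LinearMap.ker ψ) ≤ finrank R (LinearMap.ker E) := by
    set φ : LinearMap.ker ψ →ₗ[R] LinearMap.ker E :=
      { toFun := fun y => ⟨((y : LinearMap.ker (Q ∘ₗ E)) : M), by
          have hy : ψ (y : LinearMap.ker (Q ∘ₗ E)) = 0 := y.2
          have := congrArg Subtype.val hy
          exact LinearMap.mem_ker.mpr this⟩
        map_add' := fun y z => rfl
        map_smul' := fun c y => rfl }
    have hφinj : Function.Injective φ := by
      intro y z h
      have h2 : ((φ y : ↥(LinearMap.ker E)) : M) = ((φ z : ↥(LinearMap.ker E)) : M) :=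
        congrArg Subtype.val h
      exact Subtype.ext (Subtype.ext h2)
    exact LinearMap.finrank_le_finrank_of_injective hφinj
  omega

lemma fv_ker_lt [FiniteDimensional Fq K] {n : ℕ} (s : ℕ) (hn : Module.finrank Fq K = n)
    (hn0 : 0 < n) (hs : Nat.Coprime s n) :
    ∀ (m : ℕ) (δ : Fin m → K), linComb Fq s δ ≠ 0 →
      finrank Fq (LinearMap.ker (linComb Fq s δ)) < m := by
  intro m
  induction m with
  | zero =>
    intro δ hδ
    exact absurd (by simp [linComb]) hδ
  | succ m ih =>
    intro δ hδ
    by_cases hker : LinearMap.ker (linComb Fq s δ) = ⊥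
    · rw [hker]
      simp only [finrank_bot]
      omega
    · obtain ⟨v, hvmem, hv⟩ := Submodule.exists_mem_ne_zero_of_ne_bot hker
      rw [LinearMap.mem_ker] at hvmem
      set q := Fintype.card Fq with hq
      set Δ : K := v ^ q ^ s * v⁻¹ with hΔ
      set E : K →ₗ[Fq] K := frobPow Fq s - LinearMap.mulLeft Fq Δ with hE
      obtain ⟨ε, r, hdiv⟩ := fv_division (Fq := Fq) (K := K) s Δ m δ
      have hEapp : ∀ x : K, E x = x ^ q ^ s - Δ * x := by
        intro x; simp [hE, hq]
      have hEv : E v = 0 := by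
        rw [hEapp, hΔ]
        field_simp
        simp
      have hDx : ∀ x : K, linComb Fq s δ x = linComb Fq s ε (E x) + r * x := by
        intro x
        rw [linComb_apply, linComb_apply, hEapp, hdiv x]
      have hr : r = 0 := by
        have h0 := hDx v
        rw [hvmem, hEv, map_zero, zero_add] at h0
        exact (mul_eq_zero.mp h0.symm).resolve_right hv
      have hcomp : linComb Fq s δ = (linComb Fq s ε) ∘ₗ E := by
        ext x
        rw [LinearMap.comp_apply, hDx x, hr, zero_mul, add_zero]
      have hQ0 : linComb Fq s ε ≠ 0 := by
        intro h
        rw [hcomp, h, LinearMap.zero_comp] at hδ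
        exact hδ rfl
      have hIH := ih ε hQ0
      have hkerE : finrank Fq (LinearMap.ker E) ≤ 1 := by
        calc finrank Fq (LinearMap.ker E)
            ≤ finrank Fq (Submodule.span Fq {v}) :=
              Submodule.finrank_mono (fv_ker_le_span hn hn0 hs hv)
          _ = 1 := finrank_span_singleton hv
      calc finrank Fq (LinearMap.ker (linComb Fq s δ))
          = finrank Fq (LinearMap.ker ((linComb Fq s ε) ∘ₗ E)) := by rw [hcomp]
        _ ≤ finrank Fq (LinearMap.ker (linComb Fq s ε)) + finrank Fq (LinearMap.ker E) :=
            fv_finrank_ker_comp_le _ _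
        _ < m + 1 := by omega

end FV


/-- Linearized polynomial fuzzy vault: if d_Δ(A,W) ≤ 2⌊(n-ℓ)/2⌋ then the received word c'
is within rank distance ⌊(n-ℓ)/2⌋ of the secret codeword c, and c is the unique codeword of
the Gabidulin code within that radius, so decoding recovers the key κ. -/
theorem fuzzy_vault_recovers_key (q n ℓ s : ℕ) (Fq K : Type*) [Field Fq] [Fintype Fq]
    [Field K] [Algebra Fq K] [FiniteDimensional Fq K] [DecidableEq K]
    (hq : Fintype.card Fq = q) (hn : Module.finrank Fq K = n)
    (hℓ : ℓ < n) (hs : Nat.Coprime s n)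
    (g : Fin n → K) (hg : LinearIndependent Fq g)
    (W : Finset K) (hW : W.card = n)
    (hWi : LinearIndependent Fq ((↑·) : ↥((W : Finset K) : Set K) → K))
    (f : Fin ℓ → K) (κ : K → K) (hκ : κ = fun x => ∑ i : Fin ℓ, f i * x ^ q ^ (s * (i : ℕ)))
    (L : K →ₗ[Fq] K)
    (hLW : ∀ j, g j ∈ W → L (g j) = κ (g j))
    (hchaff : ∀ x ∈ W, x ∉ Finset.image g Finset.univ → L x ≠ κ x)
    (hΔ : (Finset.image g Finset.univ \ W).card + (W \ Finset.image g Finset.univ).card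
        ≤ 2 * ((n - ℓ) / 2))
    (c c' : Fin n → K) (hc : c = fun j => κ (g j)) (hc' : c' = fun j => L (g j)) :
    Module.finrank Fq (Submodule.span Fq (Set.range (c - c'))) ≤ (n - ℓ) / 2 ∧
    ∀ f' : Fin ℓ → K,
      Module.finrank Fq (Submodule.span Fq
          (Set.range (fun j => (∑ i : Fin ℓ, f' i * g j ^ q ^ (s * (i : ℕ))) - c' j)))
        ≤ (n - ℓ) / 2 →
      (fun j => ∑ i : Fin ℓ, f' i * g j ^ q ^ (s * (i : ℕ))) = c := by
  classical
  subst hq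
  have hginj : Function.Injective g := hg.injective
  set G := Finset.image g Finset.univ with hG
  set S := Finset.filter (fun j => g j ∉ W) Finset.univ with hS
  have hGcard : G.card = n := by
    rw [hG, Finset.card_image_of_injective _ hginj, Finset.card_univ, Fintype.card_fin]
  have himg : Finset.image g S = G \ W := by
    ext x
    simp only [hG, hS, Finset.mem_image, Finset.mem_sdiff, Finset.mem_filter,
      Finset.mem_univ, true_and]
    constructor
    · rintro ⟨j, hj, rfl⟩
      exact ⟨⟨j, rfl⟩, hj⟩
    · rintro ⟨⟨j, rfl⟩, hx⟩
      exact ⟨j, hx, rfl⟩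
  have hScard : S.card = (G \ W).card := by
    rw [← himg, Finset.card_image_of_injective _ hginj]
  have hGW : (G \ W).card ≤ (n - ℓ) / 2 := by
    have e1 := Finset.card_sdiff_add_card_inter G W
    have e2 := Finset.card_sdiff_add_card_inter W G
    rw [Finset.inter_comm] at e2
    omega
  -- part 1
  have part1 : Module.finrank Fq (Submodule.span Fq (Set.range (c - c'))) ≤ (n - ℓ) / 2 := by
    set vals := Finset.image (fun j => κ (g j) - L (g j)) S with hvals
    have h1 : Set.range (c - c') ⊆ insert (0 : K) ↑vals := by
      rintro y ⟨j, rfl⟩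
      by_cases hj : g j ∈ W
      · have : (c - c') j = 0 := by
          rw [Pi.sub_apply, hc, hc']
          show κ (g j) - L (g j) = 0
          rw [hLW j hj, sub_self]
        rw [this]
        exact Set.mem_insert _ _
      · refine Set.mem_insert_of_mem _ ?_
        rw [Finset.mem_coe, hvals, Finset.mem_image]
        refine ⟨j, ?_, by simp [hc, hc']⟩
        rw [hS, Finset.mem_filter]
        exact ⟨Finset.mem_univ _, hj⟩
    calc Module.finrank Fq (Submodule.span Fq (Set.range (c - c')))
        ≤ Module.finrank Fq (Submodule.span Fq (insert (0 : K) ↑vals)) :=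
          Submodule.finrank_mono (Submodule.span_mono h1)
      _ = Module.finrank Fq (Submodule.span Fq (vals : Set K)) := by
          rw [Submodule.span_insert_zero]
      _ ≤ vals.card := by
          have := finrank_span_finset_le_card (R := Fq) vals
          simpa [Set.finrank] using this
      _ ≤ S.card := Finset.card_image_le
      _ ≤ (n - ℓ) / 2 := by omega
  refine ⟨part1, ?_⟩
  -- part 2
  intro f' hf'
  set δ : Fin ℓ → K := fun i => f' i - f i with hδ
  set D := linComb Fq (K := K) s δ with hD
  have hDapp : ∀ x : K, D x = ∑ i : Fin ℓ, δ i * x ^ Fintype.card Fq ^ (s * (i : ℕ)) :=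
    fun x => linComb_apply δ x
  have hDg : ∀ j, D (g j) = (∑ i : Fin ℓ, f' i * g j ^ Fintype.card Fq ^ (s * (i : ℕ))) - c j := by
    intro j
    rw [hDapp, hc, hκ]
    simp only [hδ, sub_mul, Finset.sum_sub_distrib]
  have hn0 : 0 < n := by omega
  haveI : Nonempty (Fin n) := ⟨⟨0, hn0⟩⟩
  have hgspan : Submodule.span Fq (Set.range g) = ⊤ := by
    have hcard : Fintype.card (Fin n) = Module.finrank Fq K := by
      rw [Fintype.card_fin, hn]
    have hB := (basisOfLinearIndependentOfCardEqFinrank hg hcard).span_eq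
    rwa [coe_basisOfLinearIndependentOfCardEqFinrank] at hB
  have hrange_eq : Submodule.span Fq (Set.range (fun j => D (g j))) = LinearMap.range D := by
    have : Set.range (fun j => D (g j)) = D '' Set.range g := by
      rw [← Set.range_comp]; rfl
    rw [this, Submodule.span_image, hgspan, Submodule.map_top]
  have hsup : Submodule.span Fq (Set.range (fun j => D (g j))) ≤
      Submodule.span Fq (Set.range (fun j =>
        (∑ i : Fin ℓ, f' i * g j ^ Fintype.card Fq ^ (s * (i : ℕ))) - c' j)) ⊔
      Submodule.span Fq (Set.range (c - c')) := by
    rw [Submodule.span_le]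
    rintro y ⟨j, rfl⟩
    have hyj : D (g j) = ((∑ i : Fin ℓ, f' i * g j ^ Fintype.card Fq ^ (s * (i : ℕ))) - c' j)
        - ((c - c') j) := by
      rw [hDg j, Pi.sub_apply]; ring
    have hmem : D (g j) ∈ (Submodule.span Fq (Set.range (fun j =>
        (∑ i : Fin ℓ, f' i * g j ^ Fintype.card Fq ^ (s * (i : ℕ))) - c' j)) ⊔
        Submodule.span Fq (Set.range (c - c')) : Submodule Fq K) := by
      rw [hyj]
      exact sub_mem
        (Submodule.mem_sup_left (Submodule.subset_span ⟨j, rfl⟩))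
        (Submodule.mem_sup_right (Submodule.subset_span ⟨j, rfl⟩))
    exact hmem
  have hsuprank := Submodule.finrank_sup_add_finrank_inf_eq
    (Submodule.span Fq (Set.range (fun j =>
      (∑ i : Fin ℓ, f' i * g j ^ Fintype.card Fq ^ (s * (i : ℕ))) - c' j)))
    (Submodule.span Fq (Set.range (c - c')))
  have hrangeD : Module.finrank Fq (LinearMap.range D) ≤ n - ℓ := by
    rw [← hrange_eq]
    have h3 := Submodule.finrank_mono hsup
    omega
  by_cases hD0 : D = 0
  · funext j
    have h0 : D (g j) = 0 := by rw [hD0]; rfl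
    rw [hDg j] at h0
    exact sub_eq_zero.mp h0
  · exfalso
    have hlt := fv_ker_lt s hn hn0 hs ℓ δ hD0
    have hrn := LinearMap.finrank_range_add_finrank_ker D
    rw [hn] at hrn
    rw [← hD] at hlt
    omega
end

section
/- Let A, W be n-element F_q-linearly independent subsets of F_{q^m} (n ≤ m), spanning subspaces 𝒜 and 𝒲 respectively. Let κ, L be F_q-linear maps F_{q^m} → F_{q^m} such that L agrees with κ on A ∩ W and, on a set of basis vectors completing 𝒜 ∩ 𝒲 to 𝒜, the differences (L - κ) take values forming part of a normal basis (hence linearly independent). Then d_S(𝒜,𝒲) ≤ 2·rank((κ - L)|_𝒜) ≤ d_S(𝒜,𝒲) + 2·rank((κ-L)|_{𝒜∩𝒲}) ≤ d_Δ(A,W), where d_S(𝒜,𝒲) = dim 𝒜 + dim 𝒲 - 2 dim(𝒜 ∩ 𝒲) is the subspace distance. -/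
open Module Submodule

lemma map_rank_aux {R M : Type*} [Field R] [AddCommGroup M] [Module R M]
    [FiniteDimensional R M] (f : M →ₗ[R] M) (N S : Submodule R M)
    (hSN : S ≤ N) (hSk : S ≤ LinearMap.ker f) :
    Module.finrank R (Submodule.map f N) + Module.finrank R S ≤ Module.finrank R N := by
  have h1 := LinearMap.finrank_range_add_finrank_ker (f.comp N.subtype)
  have hr : LinearMap.range (f.comp N.subtype) = Submodule.map f N := by
    rw [LinearMap.range_comp, Submodule.range_subtype]
  have hS : Submodule.comap N.subtype S ≤ LinearMap.ker (f.comp N.subtype) := by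
    intro x hx
    simp only [Submodule.mem_comap, LinearMap.mem_ker, LinearMap.comp_apply,
      Submodule.subtype_apply] at *
    exact hSk hx
  have h2 : Module.finrank R S ≤ Module.finrank R (LinearMap.ker (f.comp N.subtype)) := by
    calc Module.finrank R S = Module.finrank R (Submodule.comap N.subtype S) :=
          ((Submodule.comapSubtypeEquivOfLe hSN).finrank_eq).symm
      _ ≤ _ := Submodule.finrank_mono hS
  have h3 : Module.finrank R (Submodule.map f N)
      = Module.finrank R (LinearMap.range (f.comp N.subtype)) := by rw [hr]
  omega

/-- Generalized LPFV inequalities: with L agreeing with κ on A ∩ W and the differences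
L - κ taking linearly independent (normal-basis) values on a completion of 𝒜 ∩ 𝒲 to a
basis of 𝒜, one has
d_S(𝒜,𝒲) ≤ 2·rank((κ-L)|_𝒜) ≤ d_S(𝒜,𝒲) + 2·rank((κ-L)|_{𝒜∩𝒲}) ≤ d_Δ(A,W). -/
theorem generalized_lpfv_inequalities (q m n : ℕ) (Fq K : Type*) [Field Fq] [Fintype Fq]
    [Field K] [Algebra Fq K] [FiniteDimensional Fq K] [DecidableEq K]
    (hq : Fintype.card Fq = q) (hm : Module.finrank Fq K = m) (hn : n ≤ m)
    (A W : Finset K) (hA : A.card = n) (hW : W.card = n)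
    (hAi : LinearIndependent Fq ((↑·) : ↥((A : Finset K) : Set K) → K))
    (hWi : LinearIndependent Fq ((↑·) : ↥((W : Finset K) : Set K) → K))
    (𝒜 𝒲 : Submodule Fq K)
    (h𝒜 : 𝒜 = Submodule.span Fq (A : Set K)) (h𝒲 : 𝒲 = Submodule.span Fq (W : Set K))
    (κ L : K →ₗ[Fq] K)
    (hagree : ∀ x ∈ A ∩ W, L x = κ x)
    (hcompl : ∃ v : Fin (n - Module.finrank Fq ↥(𝒜 ⊓ 𝒲)) → K,
      (∀ i, v i ∈ 𝒜) ∧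
      LinearIndependent Fq (fun i => L (v i) - κ (v i)) ∧
      (𝒜 ⊓ 𝒲) ⊔ Submodule.span Fq (Set.range v) = 𝒜) :
    Module.finrank Fq 𝒜 + Module.finrank Fq 𝒲 - 2 * Module.finrank Fq ↥(𝒜 ⊓ 𝒲) ≤
        2 * Module.finrank Fq (Submodule.map (κ - L) 𝒜) ∧
    2 * Module.finrank Fq (Submodule.map (κ - L) 𝒜) ≤
        (Module.finrank Fq 𝒜 + Module.finrank Fq 𝒲 - 2 * Module.finrank Fq ↥(𝒜 ⊓ 𝒲)) +
          2 * Module.finrank Fq (Submodule.map (κ - L) (𝒜 ⊓ 𝒲)) ∧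
    (Module.finrank Fq 𝒜 + Module.finrank Fq 𝒲 - 2 * Module.finrank Fq ↥(𝒜 ⊓ 𝒲)) +
          2 * Module.finrank Fq (Submodule.map (κ - L) (𝒜 ⊓ 𝒲)) ≤
        (A \ W).card + (W \ A).card := by
  classical
  obtain ⟨v, hv𝒜, hvli, hvsup⟩ := hcompl
  set f : K →ₗ[Fq] K := κ - L with hf
  -- finrank of 𝒜 and 𝒲
  have hA𝒜 : Module.finrank Fq 𝒜 = n := by
    rw [h𝒜, finrank_span_finset_eq_card hAi, hA]
  have hW𝒲 : Module.finrank Fq 𝒲 = n := by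
    rw [h𝒲, finrank_span_finset_eq_card hWi, hW]
  have hrn : Module.finrank Fq ↥(𝒜 ⊓ 𝒲) ≤ n := hA𝒜 ▸ Submodule.finrank_mono inf_le_left
  -- span of A ∩ W
  have hAWsub : Submodule.span Fq ((A ∩ W : Finset K) : Set K) ≤ 𝒜 ⊓ 𝒲 := by
    rw [h𝒜, h𝒲]
    exact le_inf (Submodule.span_mono (by exact_mod_cast Finset.inter_subset_left))
      (Submodule.span_mono (by exact_mod_cast Finset.inter_subset_right))
  have hAWli : LinearIndependent Fq ((↑·) : ↥(((A ∩ W : Finset K)) : Set K) → K) :=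
    linearIndependent_subtype_iff.mpr ((linearIndependent_subtype_iff.mp hAi).mono (by exact_mod_cast Finset.inter_subset_left))
  have hAWrank : Module.finrank Fq (Submodule.span Fq ((A ∩ W : Finset K) : Set K))
      = (A ∩ W).card := finrank_span_finset_eq_card hAWli
  have hcr : (A ∩ W).card ≤ Module.finrank Fq ↥(𝒜 ⊓ 𝒲) := by
    rw [← hAWrank]; exact Submodule.finrank_mono hAWsub
  -- f vanishes on span (A ∩ W)
  have hker : Submodule.span Fq ((A ∩ W : Finset K) : Set K) ≤ LinearMap.ker f := by
    rw [Submodule.span_le]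
    intro x hx
    simp only [SetLike.mem_coe, LinearMap.mem_ker, hf, LinearMap.sub_apply]
    rw [hagree x (by exact_mod_cast hx)]
    exact sub_self _
  -- rank of f on 𝒜 ⊓ 𝒲
  have hint : Module.finrank Fq (Submodule.map f (𝒜 ⊓ 𝒲)) + (A ∩ W).card
      ≤ Module.finrank Fq ↥(𝒜 ⊓ 𝒲) := by
    rw [← hAWrank]
    exact map_rank_aux f (𝒜 ⊓ 𝒲) _ hAWsub hker
  -- the image of span v
  have hfvli : LinearIndependent Fq (fun i => f (v i)) := by
    have h := hvli.map' (LinearEquiv.neg Fq (M := K)).toLinearMap (LinearEquiv.ker _)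
    have e : ((LinearEquiv.neg Fq (M := K)).toLinearMap ∘ fun i => L (v i) - κ (v i))
        = fun i => f (v i) := by
      funext i
      simp [hf, LinearMap.sub_apply, neg_sub]
    rwa [e] at h
  have hmapspan : Submodule.map f (Submodule.span Fq (Set.range v))
      = Submodule.span Fq (Set.range fun i => f (v i)) := by
    rw [Submodule.map_span, ← Set.range_comp]; rfl
  have hspanrank : Module.finrank Fq (Submodule.map f (Submodule.span Fq (Set.range v)))
      = n - Module.finrank Fq ↥(𝒜 ⊓ 𝒲) := by
    rw [hmapspan, finrank_span_eq_card hfvli, Fintype.card_fin]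
  -- map of 𝒜
  have hmapA : Submodule.map f 𝒜
      = Submodule.map f (𝒜 ⊓ 𝒲) ⊔ Submodule.map f (Submodule.span Fq (Set.range v)) := by
    rw [← Submodule.map_sup, hvsup]
  have hlow : n - Module.finrank Fq ↥(𝒜 ⊓ 𝒲) ≤ Module.finrank Fq (Submodule.map f 𝒜) := by
    rw [← hspanrank, hmapA]
    exact Submodule.finrank_mono le_sup_right
  have hup : Module.finrank Fq (Submodule.map f 𝒜)
      ≤ Module.finrank Fq (Submodule.map f (𝒜 ⊓ 𝒲))
        + (n - Module.finrank Fq ↥(𝒜 ⊓ 𝒲)) := by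
    rw [hmapA]
    calc Module.finrank Fq ↥(Submodule.map f (𝒜 ⊓ 𝒲) ⊔ Submodule.map f (Submodule.span Fq (Set.range v)))
        ≤ Module.finrank Fq (Submodule.map f (𝒜 ⊓ 𝒲))
          + Module.finrank Fq (Submodule.map f (Submodule.span Fq (Set.range v))) :=
          Submodule.finrank_add_le_finrank_add_finrank _ _
      _ = _ := by rw [hspanrank]
  -- cardinalities of set differences
  have hAd : (A \ W).card = n - (A ∩ W).card := by
    rw [← Finset.sdiff_inter_self_left, Finset.card_sdiff_of_subset Finset.inter_subset_left, hA]
  have hWd : (W \ A).card = n - (A ∩ W).card := by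
    rw [← Finset.sdiff_inter_self_left, Finset.card_sdiff_of_subset Finset.inter_subset_left, hW,
      Finset.inter_comm]
  rw [hA𝒜, hW𝒲, hAd, hWd]
  omega
end

section
/- For every prime power q and positive integer m, there exists α ∈ F_{q^m} such that {α, α^q, α^{q^2}, ..., α^{q^{m-1}}} is a basis of F_{q^m} over F_q (existence of a normal basis). -/
set_option maxHeartbeats 1600000 in
/-- Existence of a normal basis: there is α ∈ F_{q^m} such that
{α, α^q, …, α^{q^{m-1}}} is an F_q-basis of F_{q^m}. -/
theorem exists_normal_basis (q m : ℕ) (Fq K : Type*) [Field Fq] [Fintype Fq]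
    [Field K] [Algebra Fq K] [FiniteDimensional Fq K]
    (hq : Fintype.card Fq = q) (hm : Module.finrank Fq K = m) :
    ∃ α : K, LinearIndependent Fq (fun i : Fin m => α ^ q ^ (i : ℕ)) ∧
      Submodule.span Fq (Set.range fun i : Fin m => α ^ q ^ (i : ℕ)) = ⊤ := by
  classical
  have hq1 : 1 < q := hq ▸ Fintype.one_lt_card
  have hm0 : 0 < m := hm ▸ Module.finrank_pos
  haveI : Finite K := Module.finite_of_finite Fq
  haveI : Fintype K := Fintype.ofFinite K
  have hK : Fintype.card K = q ^ m := by
    rw [← hq, ← hm]; exact Module.card_eq_pow_finrank (K := Fq) (V := K)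
  -- characteristic
  set p := ringChar Fq with hpdef
  haveI : CharP Fq p := ringChar.charP Fq
  obtain ⟨f, hp, hpf⟩ := FiniteField.card Fq p
  haveI : CharP K p := charP_of_injective_algebraMap (algebraMap Fq K).injective p
  haveI : Fact p.Prime := ⟨hp⟩
  have hq' : q = p ^ (f : ℕ) := by rw [← hq, hpf]
  -- the Frobenius x ↦ x^q as an Fq-linear endomorphism of K
  let φ : K →ₗ[Fq] K :=
    { toFun := fun x => x ^ q
      map_add' := fun x y => by rw [hq']; exact add_pow_char_pow ..
      map_smul' := fun c x => by
        simp only [Algebra.smul_def, mul_pow, RingHom.id_apply]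
        rw [← map_pow, ← hq, FiniteField.pow_card] }
  have hφpow : ∀ (i : ℕ) (x : K), (φ ^ i) x = x ^ q ^ i := by
    intro i
    induction i with
    | zero => intro x; simp
    | succ n ih =>
      intro x
      rw [pow_succ, Module.End.mul_apply]
      show (φ ^ n) (x ^ q) = _
      rw [ih, ← pow_mul, ← pow_succ']
  have hφm : Polynomial.aeval φ ((Polynomial.X : Polynomial Fq) ^ m - 1) = 0 := by
    rw [map_sub, map_one, Polynomial.aeval_X_pow]
    ext x
    have : x ^ Fintype.card K = x := FiniteField.pow_card x
    rw [hK] at this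
    simp [hφpow, this]
  -- Dedekind's independence of characters: low degree polynomials in φ don't vanish
  have dedekind : ∀ g : Polynomial Fq, g.degree < (m : ℕ) → Polynomial.aeval φ g = 0 →
      g = 0 := by
    intro g hdeg hg
    by_cases hg0 : g = 0
    · exact hg0
    have hnd : g.natDegree < m := by
      rwa [← Polynomial.natDegree_lt_iff_degree_lt hg0] at hdeg
    -- the monoid homs x ↦ x^(q^i), i < m, are pairwise distinct
    have hne : ∀ i j : Fin m, (i : ℕ) < (j : ℕ) →
        (powMonoidHom (q ^ (i : ℕ)) : K →* K) ≠ powMonoidHom (q ^ (j : ℕ)) := by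
      intro i j hij hEq
      have heval : ∀ x : K,
          ((Polynomial.X : Polynomial K) ^ q ^ (j : ℕ)
            - Polynomial.X ^ q ^ (i : ℕ)).eval x = 0 := by
        intro x
        have := DFunLike.congr_fun hEq x
        simp only [powMonoidHom_apply] at this
        simp [this]
      have hqij : q ^ (i : ℕ) < q ^ (j : ℕ) := Nat.pow_lt_pow_right hq1 hij
      have hP0 : ((Polynomial.X : Polynomial K) ^ q ^ (j : ℕ)
          - Polynomial.X ^ q ^ (i : ℕ)) = 0 := by
        apply Polynomial.eq_zero_of_natDegree_lt_card_of_eval_eq_zero _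
          Function.injective_id heval
        calc ((Polynomial.X : Polynomial K) ^ q ^ (j : ℕ)
              - Polynomial.X ^ q ^ (i : ℕ)).natDegree
            ≤ max (q ^ (j : ℕ)) (q ^ (i : ℕ)) := by
              refine le_trans (Polynomial.natDegree_sub_le _ _) ?_
              simp [Polynomial.natDegree_X_pow]
          _ = q ^ (j : ℕ) := max_eq_left hqij.le
          _ < q ^ m := Nat.pow_lt_pow_right hq1 j.isLt
          _ = Fintype.card K := hK.symm
      rw [sub_eq_zero] at hP0
      have := congrArg Polynomial.natDegree hP0
      simp only [Polynomial.natDegree_X_pow] at this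
      omega
    have hinj : Function.Injective
        (fun i : Fin m => (powMonoidHom (q ^ (i : ℕ)) : K →* K)) := by
      intro i j hEq
      rcases lt_trichotomy (i : ℕ) (j : ℕ) with h | h | h
      · exact absurd hEq (hne i j h)
      · exact Fin.ext h
      · exact absurd hEq.symm (hne j i h)
    have hli := (linearIndependent_monoidHom K K).comp _ hinj
    have key : ∑ i : Fin m,
        (algebraMap Fq K (g.coeff (i : ℕ))) •
          (⇑(powMonoidHom (q ^ (i : ℕ)) : K →* K) : K → K) = 0 := by
      funext x
      have h1 : Polynomial.aeval φ g = ∑ i ∈ Finset.range m, g.coeff i • φ ^ i :=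
        Polynomial.aeval_eq_sum_range' hnd φ
      have h2 := congrArg (fun ψ : K →ₗ[Fq] K => ψ x) (h1 ▸ hg)
      simp only [LinearMap.zero_apply, LinearMap.coe_sum, Finset.sum_apply,
        LinearMap.smul_apply] at h2
      rw [← Fin.sum_univ_eq_sum_range (fun i => g.coeff i • (φ ^ i) x) m] at h2
      simp only [Finset.sum_apply, Pi.smul_apply, powMonoidHom_apply, smul_eq_mul,
        Pi.zero_apply]
      rw [← h2]
      refine Finset.sum_congr rfl fun i _ => ?_
      rw [hφpow, Algebra.smul_def]
    have hzero := linearIndependent_iff'.mp hli Finset.univ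
      (fun i => algebraMap Fq K (g.coeff (i : ℕ))) key
    ext n
    rcases lt_or_ge n m with hn | hn
    · have := hzero ⟨n, hn⟩ (Finset.mem_univ _)
      simpa using (algebraMap Fq K).injective (by simpa using this)
    · simp [Polynomial.coeff_eq_zero_of_natDegree_lt (lt_of_lt_of_le hnd hn)]
  -- K as a torsion Fq[X]-module via φ
  have hXm1 : ((Polynomial.X : Polynomial Fq) ^ m - 1) ≠ 0 := by
    simpa using Polynomial.X_pow_sub_C_ne_zero hm0 (1 : Fq)
  have htors : Module.IsTorsion (Polynomial Fq) (Module.AEval' φ) := by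
    intro x
    refine ⟨⟨(Polynomial.X : Polynomial Fq) ^ m - 1,
      mem_nonZeroDivisors_of_ne_zero hXm1⟩, ?_⟩
    show ((Polynomial.X : Polynomial Fq) ^ m - 1) • x = 0
    apply (Module.AEval'.of φ).symm.injective
    rw [Module.AEval.of_symm_smul, hφm]
    simp
  -- transfer to a universe-polymorphic copy and apply the structure theorem
  let M := ULift.{max u_1 u_2} (Module.AEval' φ)
  let eM : M ≃ₗ[Polynomial Fq] Module.AEval' φ := ULift.moduleEquiv
  haveI : Module.Finite (Polynomial Fq) M := Module.Finite.equiv eM.symm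
  have htorsM : Module.IsTorsion (Polynomial Fq) M := by
    intro x
    obtain ⟨a, ha⟩ := htors (x := eM x)
    refine ⟨a, eM.injective ?_⟩
    rw [map_zero, Submonoid.smul_def, map_smul, ← Submonoid.smul_def, ha]
  obtain ⟨ι, hι, pi, hpirr, e, ⟨L⟩⟩ :=
    Module.equiv_directSum_of_isTorsion (R := Polynomial Fq) (M := M) htorsM
  haveI := hι
  let E : Module.AEval' φ ≃ₗ[Polynomial Fq]
      DirectSum ι (fun i => Polynomial Fq ⧸ (Polynomial Fq ∙ (pi i ^ e i))) := eM.symm.trans L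
  -- a cyclic vector
  let s : DirectSum ι (fun i => Polynomial Fq ⧸ (Polynomial Fq ∙ (pi i ^ e i))) :=
    ∑ i : ι, DirectSum.of _ i (Submodule.Quotient.mk 1)
  have hs : ∀ j, s j = Submodule.Quotient.mk 1 := by
    intro j
    show (∑ i : ι, DirectSum.of _ i (Submodule.Quotient.mk 1)) j = _
    rw [DFinsupp.finset_sum_apply]
    rw [Finset.sum_eq_single j]
    · exact DirectSum.of_eq_same _ _
    · intro i _ hij
      exact DirectSum.of_eq_of_ne _ _ _ (Ne.symm hij)
    · intro h; exact absurd (Finset.mem_univ j) h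
  have hkill : ∀ (i : ι) (g : Polynomial Fq), pi i ^ e i ∣ g →
      ∀ z : Polynomial Fq ⧸ (Polynomial Fq ∙ (pi i ^ e i)), g • z = 0 := by
    intro i g hdvd z
    obtain ⟨r, rfl⟩ := Submodule.Quotient.mk_surjective _ z
    rw [← Submodule.Quotient.mk_smul, Submodule.Quotient.mk_eq_zero]
    obtain ⟨c, rfl⟩ := hdvd
    exact Submodule.mem_span_singleton.mpr ⟨c * r, by simp only [smul_eq_mul]; ring⟩
  set x0 : Module.AEval' φ := E.symm s with hx0
  have claim : ∀ g : Polynomial Fq, g • x0 = 0 → Polynomial.aeval φ g = 0 := by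
    intro g hgx
    have h1 : g • s = 0 := by
      have : E (g • x0) = E 0 := congrArg E hgx
      rwa [map_smul, map_zero, hx0, E.apply_symm_apply] at this
    have hdvd : ∀ i, pi i ^ e i ∣ g := by
      intro i
      have h2 : (g • s) i = 0 := by rw [h1]; rfl
      rw [DFinsupp.smul_apply, hs i, ← Submodule.Quotient.mk_smul,
        Submodule.Quotient.mk_eq_zero] at h2
      obtain ⟨c, hc⟩ := Submodule.mem_span_singleton.mp h2
      have hc' : c * pi i ^ e i = g := by simpa [smul_eq_mul] using hc
      exact ⟨c, by rw [← hc']; ring⟩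
    ext y
    have h3 : g • (Module.AEval'.of φ y) = 0 := by
      apply E.injective
      rw [map_smul, map_zero]
      refine DFinsupp.ext fun j => ?_
      rw [DFinsupp.smul_apply]
      rw [hkill j g (hdvd j)]
      rfl
    have h4 := congrArg (Module.AEval'.of φ).symm h3
    rw [Module.AEval.of_symm_smul, map_zero, LinearEquiv.symm_apply_apply] at h4
    rw [Module.End.smul_def] at h4
    rw [LinearMap.zero_apply]
    exact h4
  set α : K := (Module.AEval'.of φ).symm x0 with hα
  have hli : LinearIndependent Fq (fun i : Fin m => α ^ q ^ (i : ℕ)) := by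
    rw [Fintype.linearIndependent_iff]
    intro c hc i₀
    set g : Polynomial Fq := ∑ i : Fin m, Polynomial.monomial (i : ℕ) (c i) with hgdef
    have hdeg : g.degree < (m : ℕ) := by
      refine lt_of_le_of_lt (Polynomial.degree_sum_le _ _) ?_
      rw [Finset.sup_lt_iff (by exact_mod_cast WithBot.bot_lt_coe m)]
      intro i _
      refine lt_of_le_of_lt (Polynomial.degree_monomial_le _ _) ?_
      exact_mod_cast i.isLt
    have hev : (Polynomial.aeval φ g) α = 0 := by
      rw [hgdef, map_sum]
      rw [LinearMap.coe_sum, Finset.sum_apply]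
      rw [← hc]
      refine Finset.sum_congr rfl fun i _ => ?_
      rw [Polynomial.aeval_monomial, Module.End.mul_apply,
        Module.algebraMap_end_apply, hφpow]
    have h5 : g • x0 = 0 := by
      apply (Module.AEval'.of φ).symm.injective
      rw [Module.AEval.of_symm_smul, map_zero]
      show (Polynomial.aeval φ g) • α = 0
      rw [Module.End.smul_def]
      exact hev
    have hg0 : g = 0 := dedekind g hdeg (claim g h5)
    have hcoeff : g.coeff (i₀ : ℕ) = c i₀ := by
      rw [hgdef, Polynomial.finset_sum_coeff]
      rw [Finset.sum_eq_single i₀]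
      · simp [Polynomial.coeff_monomial]
      · intro i _ hii
        rw [Polynomial.coeff_monomial]
        rw [if_neg (fun h => hii (Fin.ext h))]
      · intro h; exact absurd (Finset.mem_univ i₀) h
    rw [← hcoeff, hg0]
    simp
  refine ⟨α, hli, ?_⟩
  have hcard : Fintype.card (Fin m) = Module.finrank Fq K := by simp [hm]
  haveI : Nonempty (Fin m) := ⟨⟨0, hm0⟩⟩
  let b := basisOfLinearIndependentOfCardEqFinrank hli hcard
  have hb : ⇑b = fun i : Fin m => α ^ q ^ (i : ℕ) :=
    coe_basisOfLinearIndependentOfCardEqFinrank _ _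
  rw [← hb]
  exact b.span_eq
end
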